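/- Let 𝔅 be a unital algebra and 𝔄 an algebra containing 𝔅 as a subalgebra. Let 𝔄₂ ⊆ 𝔄 be a subalgebra containing 𝔅, and 𝔄₁ = 𝔅 ⊕ 𝔄₁⁰ a subalgebra of 𝔄, where 𝔄₁⁰ is a subalgebra with 𝔅·𝔄₁⁰ ⊆ 𝔄₁⁰ and 𝔄₁⁰·𝔅 ⊆ 𝔄₁⁰. Let Φ : 𝔄 → 𝔅 be a conditional expectation satisfying the monotonic product relations: for all a, a' ∈ 𝔄₁⁰, b ∈ 𝔄₂ and α, β ∈ 𝔄: Φ(α a b a' β) = Φ(α a Φ₂(b) a' β), Φ(b a β) = Φ₂(b) Φ(a β), Φ(α a b) = Φ(α a) Φ₂(b), where Φ₂ = Φ|_{𝔄₂} (and the corresponding relations with α and/or β omitted). Then for every n ≥ 1, all b₀, b₁, …, bₙ ∈ 𝔄₂ and all a₁, …, aₙ ∈ 𝔄₁⁰: Φ(b₀ a₁ b₁ a₂ ⋯ aₙ bₙ) = Φ(Φ₂(b₀) a₁ Φ₂(b₁) a₂ ⋯ aₙ Φ₂(bₙ)), where the argument on the right-hand side lies in 𝔄₁. -/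
import Mathlib



/-- well-definedness formula after Definition 6.1: the monotonic
product conditional expectation `Φ = Φ₁ ▷ Φ₂` satisfies, on alternating words
`b₀ a₁ b₁ ⋯ aₙ bₙ` (`b_j ∈ 𝔄₂`, `a_j ∈ 𝔄₁⁰`),
`Φ(b₀ a₁ b₁ ⋯ aₙ bₙ) = Φ(Φ₂(b₀) a₁ Φ₂(b₁) ⋯ aₙ Φ₂(bₙ))`, the argument on the
right-hand side lying in `𝔄₁ = 𝔅 ⊕ 𝔄₁⁰`. -/
theorem monotonicProduct_welldefined {B A : Type*}
    [Ring B] [Algebra ℂ B] [Ring A] [Algebra ℂ A]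
    (ι : B →ₐ[ℂ] A) (hι : Function.Injective ι)
    (A₂ : Subalgebra ℂ A) (hA₂B : ∀ c : B, ι c ∈ A₂)
    (A₁₀ : NonUnitalSubalgebra ℂ A)
    (hBA₁₀ : ∀ (c : B), ∀ a ∈ A₁₀, ι c * a ∈ A₁₀)
    (hA₁₀B : ∀ (c : B), ∀ a ∈ A₁₀, a * ι c ∈ A₁₀)
    (hdirect : ∀ (c : B), ∀ a ∈ A₁₀, ι c + a = 0 → c = 0 ∧ a = 0)
    (Φ : A →ₗ[ℂ] B)
    (hfix : ∀ c : B, Φ (ι c) = c)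
    (hbimod : ∀ (c₁ c₂ : B) (x : A), Φ (ι c₁ * x * ι c₂) = c₁ * Φ x * c₂)
    -- the defining relations of the monotonic product `Φ₁ ▷ Φ₂`
    (hrel₁ : ∀ a ∈ A₁₀, ∀ a' ∈ A₁₀, ∀ w ∈ A₂, ∀ α β : A,
      Φ (α * a * w * a' * β) = Φ (α * a * ι (Φ w) * a' * β))
    (hrel₂ : ∀ a ∈ A₁₀, ∀ a' ∈ A₁₀, ∀ w ∈ A₂, ∀ β : A,
      Φ (a * w * a' * β) = Φ (a * ι (Φ w) * a' * β))
    (hrel₃ : ∀ a ∈ A₁₀, ∀ a' ∈ A₁₀, ∀ w ∈ A₂, ∀ α : A,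
      Φ (α * a * w * a') = Φ (α * a * ι (Φ w) * a'))
    (hrel₄ : ∀ a ∈ A₁₀, ∀ a' ∈ A₁₀, ∀ w ∈ A₂,
      Φ (a * w * a') = Φ (a * ι (Φ w) * a'))
    (hrel₅ : ∀ w ∈ A₂, ∀ a ∈ A₁₀, ∀ β : A, Φ (w * a * β) = Φ w * Φ (a * β))
    (hrel₆ : ∀ w ∈ A₂, ∀ a ∈ A₁₀, Φ (w * a) = Φ w * Φ a)
    (hrel₇ : ∀ a ∈ A₁₀, ∀ w ∈ A₂, ∀ α : A, Φ (α * a * w) = Φ (α * a) * Φ w)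
    (hrel₈ : ∀ a ∈ A₁₀, ∀ w ∈ A₂, Φ (a * w) = Φ a * Φ w) :
    ∀ (n : ℕ), 1 ≤ n → ∀ bs as : ℕ → A,
      (∀ j, j ≤ n → bs j ∈ A₂) → (∀ j, 1 ≤ j → j ≤ n → as j ∈ A₁₀) →
      Φ (bs 0 * (List.ofFn fun t : Fin n => as (t.1 + 1) * bs (t.1 + 1)).prod) =
        Φ (ι (Φ (bs 0)) *
          (List.ofFn fun t : Fin n => as (t.1 + 1) * ι (Φ (bs (t.1 + 1)))).prod) ∧
      ∃ (c : B) (a₀ : A), a₀ ∈ A₁₀ ∧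
        ι (Φ (bs 0)) *
          (List.ofFn fun t : Fin n => as (t.1 + 1) * ι (Φ (bs (t.1 + 1)))).prod =
        ι c + a₀ := by

  -- auxiliary: nonempty products of elements of `A₁₀` lie in `A₁₀`
  have memprod : ∀ n : ℕ, 1 ≤ n → ∀ f : ℕ → A, (∀ j, j < n → f j ∈ A₁₀) →
      (List.ofFn fun t : Fin n => f t.1).prod ∈ A₁₀ := by
    intro n
    induction n with
    | zero => omega
    | succ m ih =>
      intro _ f hf
      simp only [List.ofFn_succ, Fin.val_succ, Fin.val_zero, List.prod_cons]
      rcases Nat.eq_zero_or_pos m with hm | hm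
      · subst hm; simpa using hf 0 (by omega)
      · exact A₁₀.mul_mem (hf 0 (by omega))
          (ih hm (fun j => f (j + 1)) (fun j hj => hf (j + 1) (by omega)))
  -- auxiliary: the word starting with an `A₁₀` element
  have aux : ∀ n : ℕ, ∀ a ∈ A₁₀, ∀ bs as : ℕ → A,
      (∀ j, j ≤ n → bs j ∈ A₂) → (∀ j, 1 ≤ j → j ≤ n → as j ∈ A₁₀) →
      Φ (a * bs 0 * (List.ofFn fun t : Fin n => as (t.1 + 1) * bs (t.1 + 1)).prod) =
      Φ (a * ι (Φ (bs 0)) *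
        (List.ofFn fun t : Fin n => as (t.1 + 1) * ι (Φ (bs (t.1 + 1)))).prod) := by
    intro n
    induction n with
    | zero =>
      intro a ha bs as hbs _
      simp only [List.ofFn_zero, List.prod_nil, mul_one]
      rw [hrel₈ a ha (bs 0) (hbs 0 le_rfl),
        hrel₈ a ha (ι (Φ (bs 0))) (hA₂B _), hfix]
    | succ m ih =>
      intro a ha bs as hbs has
      simp only [List.ofFn_succ, Fin.val_succ, Fin.val_zero, List.prod_cons]
      have ha1 : as 1 ∈ A₁₀ := has 1 le_rfl (by omega)
      calc Φ (a * bs 0 * (as 1 * bs 1 *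
              (List.ofFn fun i : Fin m => as (i.1 + 1 + 1) * bs (i.1 + 1 + 1)).prod))
          = Φ (a * bs 0 * as 1 * (bs 1 *
              (List.ofFn fun i : Fin m => as (i.1 + 1 + 1) * bs (i.1 + 1 + 1)).prod)) := by
            congr 1; noncomm_ring
        _ = Φ (a * ι (Φ (bs 0)) * as 1 * (bs 1 *
              (List.ofFn fun i : Fin m => as (i.1 + 1 + 1) * bs (i.1 + 1 + 1)).prod)) :=
            hrel₂ a ha (as 1) ha1 (bs 0) (hbs 0 (by omega)) _
        _ = Φ ((a * ι (Φ (bs 0)) * as 1) * bs 1 *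
              (List.ofFn fun i : Fin m => as (i.1 + 1 + 1) * bs (i.1 + 1 + 1)).prod) := by
            congr 1; noncomm_ring
        _ = Φ ((a * ι (Φ (bs 0)) * as 1) * ι (Φ (bs 1)) *
              (List.ofFn fun i : Fin m =>
                as (i.1 + 1 + 1) * ι (Φ (bs (i.1 + 1 + 1)))).prod) := by
            exact ih (a * ι (Φ (bs 0)) * as 1)
              (A₁₀.mul_mem (hA₁₀B _ a ha) ha1)
              (fun j => bs (j + 1)) (fun j => as (j + 1))
              (fun j hj => hbs (j + 1) (by omega))
              (fun j hj1 hj2 => has (j + 1) (by omega) (by omega))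
        _ = Φ (a * ι (Φ (bs 0)) * (as 1 * ι (Φ (bs 1)) *
              (List.ofFn fun i : Fin m =>
                as (i.1 + 1 + 1) * ι (Φ (bs (i.1 + 1 + 1)))).prod)) := by
            congr 1; noncomm_ring
  intro n hn bs as hbs has
  constructor
  · obtain ⟨m, rfl⟩ : ∃ m, n = m + 1 := ⟨n - 1, by omega⟩
    simp only [List.ofFn_succ, Fin.val_succ, Fin.val_zero, List.prod_cons]
    have ha1 : as 1 ∈ A₁₀ := has 1 le_rfl (by omega)
    calc Φ (bs 0 * (as 1 * bs 1 *
            (List.ofFn fun i : Fin m => as (i.1 + 1 + 1) * bs (i.1 + 1 + 1)).prod))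
        = Φ (bs 0 * as 1 * (bs 1 *
            (List.ofFn fun i : Fin m => as (i.1 + 1 + 1) * bs (i.1 + 1 + 1)).prod)) := by
          congr 1; noncomm_ring
      _ = Φ (bs 0) * Φ (as 1 * (bs 1 *
            (List.ofFn fun i : Fin m => as (i.1 + 1 + 1) * bs (i.1 + 1 + 1)).prod)) :=
          hrel₅ (bs 0) (hbs 0 (by omega)) (as 1) ha1 _
      _ = Φ (bs 0) * Φ (as 1 * bs 1 *
            (List.ofFn fun i : Fin m => as (i.1 + 1 + 1) * bs (i.1 + 1 + 1)).prod) := by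
          rw [mul_assoc]
      _ = Φ (bs 0) * Φ (as 1 * ι (Φ (bs 1)) *
            (List.ofFn fun i : Fin m =>
              as (i.1 + 1 + 1) * ι (Φ (bs (i.1 + 1 + 1)))).prod) := by
          rw [aux m (as 1) ha1 (fun j => bs (j + 1)) (fun j => as (j + 1))
            (fun j hj => hbs (j + 1) (by omega))
            (fun j hj1 hj2 => has (j + 1) (by omega) (by omega))]
      _ = Φ (ι (Φ (bs 0))) * Φ (as 1 * (ι (Φ (bs 1)) *
            (List.ofFn fun i : Fin m =>
              as (i.1 + 1 + 1) * ι (Φ (bs (i.1 + 1 + 1)))).prod)) := by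
          rw [hfix, mul_assoc]
      _ = Φ (ι (Φ (bs 0)) * (as 1 * ι (Φ (bs 1)) *
            (List.ofFn fun i : Fin m =>
              as (i.1 + 1 + 1) * ι (Φ (bs (i.1 + 1 + 1)))).prod)) := by
          rw [← hrel₅ (ι (Φ (bs 0))) (hA₂B _) (as 1) ha1]
          congr 1; noncomm_ring
  · refine ⟨0, ι (Φ (bs 0)) *
      (List.ofFn fun t : Fin n => as (t.1 + 1) * ι (Φ (bs (t.1 + 1)))).prod, ?_, by
        rw [map_zero, zero_add]⟩
    exact hBA₁₀ _ _ (memprod n hn (fun j => as (j + 1) * ι (Φ (bs (j + 1))))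
      (fun j hj => hA₁₀B _ _ (has (j + 1) (by omega) (by omega))))
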